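/- arXiv:2109.10659 — 2 statements merged into one kernel-verified Lean document; each statement's English description precedes it below -/
import Mathlib

section
/- For k ∈ ℕ and δ ∈ (0,1), define α_k = sup{α ∈ (0,1) : γ(k/2, αk/2)/Γ(k/2) ≤ δ}, where γ is the lower incomplete gamma function. Then the sequence {α_k} is monotonically increasing in k and converges to 1 as k → ∞. -/
/-- `α_k = sup{α ∈ (0,1) : γ(k/2, αk/2)/Γ(k/2) ≤ δ}` with `γ` the lower incomplete
gamma function. -/
noncomputable def alphaSeq (δ : ℝ) (k : ℕ) : ℝ :=
  sSup {α : ℝ | α ∈ Set.Ioo (0 : ℝ) 1 ∧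
    (∫ t in Set.Ioo (0 : ℝ) (α * k / 2), t ^ ((k : ℝ) / 2 - 1) * Real.exp (-t)) /
      Real.Gamma ((k : ℝ) / 2) ≤ δ}

open MeasureTheory Real Set Filter

noncomputable section

/-- `ν t = t - log t`. -/
def nuF (t : ℝ) : ℝ := t - Real.log t

lemma nuF_one : nuF 1 = 1 := by simp [nuF]

lemma one_le_nuF {t : ℝ} (ht : 0 < t) : 1 ≤ nuF t := by
  have := Real.log_le_sub_one_of_pos ht
  simp only [nuF]; linarith

lemma nuF_strictMonoOn : StrictMonoOn nuF (Set.Ici 1) := by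
  intro a ha b hb hab
  simp only [Set.mem_Ici] at ha hb
  have ha0 : (0:ℝ) < a := by linarith
  have hb0 : (0:ℝ) < b := by linarith
  have h1 : Real.log b - Real.log a = Real.log (b / a) := (Real.log_div (ne_of_gt hb0) (ne_of_gt ha0)).symm
  have h2 : Real.log (b / a) < b / a - 1 := by
    have hne : Real.log (b / a) ≠ 0 := by
      intro h
      have hba : b / a = 1 := by
        have := Real.exp_log (show (0:ℝ) < b / a by positivity)
        rw [h, Real.exp_zero] at this; exact this.symm
      have : b = a := by field_simp at hba; linarith
      linarith
    have := Real.add_one_lt_exp hne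
    rw [Real.exp_log (show (0:ℝ) < b / a by positivity)] at this
    linarith
  have h3 : b / a - 1 ≤ b - a := by
    rw [div_sub_one (ne_of_gt ha0), div_le_iff₀ ha0]
    nlinarith
  simp only [nuF]
  nlinarith [h1, h2, h3]

lemma nuF_strictAntiOn : StrictAntiOn nuF (Set.Ioc 0 1) := by
  intro a ha b hb hab
  obtain ⟨ha0, _⟩ := ha
  obtain ⟨hb0, hb1⟩ := hb
  have h2 : Real.log (a / b) < a / b - 1 := by
    have := Real.add_one_lt_exp (x := Real.log (a / b)) (by
      intro h
      have : a / b = 1 := by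
        have := Real.exp_log (show (0:ℝ) < a / b by positivity)
        rw [h] at this; simpa using this.symm
      have : a = b := by field_simp at this; linarith
      exact absurd this (ne_of_lt hab))
    rw [Real.exp_log (show (0:ℝ) < a / b by positivity)] at this
    linarith
  have h1 : Real.log a - Real.log b = Real.log (a / b) := (Real.log_div (ne_of_gt ha0) (ne_of_gt hb0)).symm
  -- log(a/b) < a/b - 1 = (a-b)/b  so  log b - log a > (b-a)/b ≥ b-a
  have h3 : a / b - 1 = (a - b) / b := by field_simp
  have h4 : (a - b)/b ≤ (a - b) := by
    rw [div_le_iff₀ hb0]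
    nlinarith
  simp only [nuF]
  nlinarith [h1, h2, h3, h4]

lemma nuF_continuousAt {t : ℝ} (ht : 0 < t) : ContinuousAt nuF t :=
  continuousAt_id.sub (Real.continuousAt_log (ne_of_gt ht))

lemma nuF_hasDerivAt {t : ℝ} (ht : 0 < t) : HasDerivAt nuF (1 - 1/t) t := by
  exact ((hasDerivAt_id t).sub (Real.hasDerivAt_log (ne_of_gt ht))).congr_deriv (by rw [one_div])

/-- key elementary inequality : `2 log w ≤ w - 1/w` for `w ≥ 1`. -/
lemma two_log_le {w : ℝ} (hw : 1 ≤ w) : 2 * Real.log w ≤ w - 1/w := by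
  have key : ∀ x : ℝ, 0 < x → HasDerivAt (fun w : ℝ => w - 1/w - 2 * Real.log w)
      (1 - (-1/x^2) - 2 * x⁻¹) x := by
    intro x hx0
    have h1 : HasDerivAt (fun w : ℝ => 1/w) (-1/x^2) x := by
      simpa [one_div, neg_div] using (hasDerivAt_inv (ne_of_gt hx0))
    exact ((hasDerivAt_id x).sub h1).sub ((Real.hasDerivAt_log (ne_of_gt hx0)).const_mul 2)
  have hmono : MonotoneOn (fun w : ℝ => w - 1/w - 2 * Real.log w) (Set.Ici 1) := by
    apply monotoneOn_of_deriv_nonneg (convex_Ici 1)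
    · intro x hx
      have hx0 : (0:ℝ) < x := lt_of_lt_of_le one_pos hx
      exact (key x hx0).continuousAt.continuousWithinAt
    · intro x hx
      rw [interior_Ici] at hx
      have hx0 : (0:ℝ) < x := lt_trans one_pos hx
      exact (key x hx0).differentiableAt.differentiableWithinAt
    · intro x hx
      rw [interior_Ici] at hx
      have hx0 : (0:ℝ) < x := lt_trans one_pos hx
      rw [(key x hx0).deriv]
      have hxx : (1:ℝ) - (-1/x^2) - 2 * x⁻¹ = (1 - x⁻¹)^2 + (1/x^2 - x⁻¹*x⁻¹) := by ring
      rw [hxx]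
      have h2 : (1:ℝ)/x^2 - x⁻¹*x⁻¹ = 0 := by field_simp; ring
      rw [h2]
      simp
      positivity
  have := hmono (Set.self_mem_Ici) (show w ∈ Set.Ici 1 from hw) hw
  simp only [Real.log_one] at this
  linarith


lemma nuF_gt_one {t : ℝ} (h0 : 0 < t) (h1 : t < 1) : 1 < nuF t := by
  have := nuF_strictAntiOn (Set.mem_Ioc.2 ⟨h0, le_of_lt h1⟩) (Set.mem_Ioc.2 ⟨one_pos, le_refl 1⟩) h1
  rwa [nuF_one] at this

lemma exists_upper_conj {v : ℝ} (hv : 1 < v) : ∃ w, 1 < w ∧ nuF w = v := by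
  set u : ℝ := 1 + Real.sqrt v with hu
  have hv0 : (0:ℝ) ≤ v := by linarith
  have hsq : Real.sqrt v ^ 2 = v := Real.sq_sqrt hv0
  have hu1 : (1:ℝ) ≤ u := by
    have := Real.sqrt_nonneg v
    simp only [hu]; linarith
  have hR1 : (1:ℝ) ≤ u^2 := by nlinarith
  have hcont : ContinuousOn nuF (Set.Icc 1 (u^2)) := by
    intro x hx
    exact (nuF_continuousAt (by linarith [hx.1] : (0:ℝ) < x)).continuousWithinAt
  have hnuR : v ≤ nuF (u^2) := by
    have hlog : Real.log (u^2) = 2 * Real.log u := by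
      rw [sq, Real.log_mul (by linarith) (by linarith)]; ring
    have hlogu : Real.log u ≤ u - 1 := Real.log_le_sub_one_of_pos (by linarith)
    have : nuF (u^2) = u^2 - 2 * Real.log u := by rw [nuF, hlog]
    rw [this]
    have h2 : u^2 - 2 * Real.log u ≥ u^2 - 2*(u-1) := by linarith
    have : u^2 - 2*(u-1) = (u-1)^2 + 1 := by ring
    nlinarith [hsq]
  have hmem : v ∈ Set.Icc (nuF 1) (nuF (u^2)) := by
    rw [nuF_one]; exact ⟨le_of_lt hv, hnuR⟩
  obtain ⟨w, hw, hweq⟩ := intermediate_value_Icc hR1 hcont hmem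
  refine ⟨w, ?_, hweq⟩
  rcases eq_or_lt_of_le hw.1 with h | h
  · exfalso; rw [← h, nuF_one] at hweq; linarith
  · exact h

open Classical in
/-- the inverse of `nuF` on `[1, ∞)`. -/
def iconj (v : ℝ) : ℝ := if h : ∃ w, 1 < w ∧ nuF w = v then h.choose else 1

lemma iconj_spec {v : ℝ} (hv : 1 < v) : 1 < iconj v ∧ nuF (iconj v) = v := by
  have h := exists_upper_conj hv
  rw [iconj]
  rw [dif_pos h]
  exact h.choose_spec

lemma nuF_inj_upper {w w' : ℝ} (hw : 1 ≤ w) (hw' : 1 ≤ w') (h : nuF w = nuF w') : w = w' :=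
  nuF_strictMonoOn.injOn hw hw' h

lemma nuF_inj_lower {t t' : ℝ} (ht : t ∈ Set.Ioc (0:ℝ) 1) (ht' : t' ∈ Set.Ioc (0:ℝ) 1)
    (h : nuF t = nuF t') : t = t' := nuF_strictAntiOn.injOn ht ht' h

lemma iconj_lt_iconj {v v' : ℝ} (hv : 1 < v) (hvv : v < v') : iconj v < iconj v' := by
  obtain ⟨h1, h2⟩ := iconj_spec hv
  obtain ⟨h1', h2'⟩ := iconj_spec (lt_trans hv hvv)
  by_contra hle
  push_neg at hle
  rcases eq_or_lt_of_le hle with h | h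
  · have := congrArg nuF h
    rw [h2, h2'] at this; linarith
  · have := nuF_strictMonoOn (Set.mem_Ici.2 (le_of_lt h1')) (Set.mem_Ici.2 (le_of_lt h1)) h
    rw [h2, h2'] at this; linarith

lemma iconj_continuousAt {v : ℝ} (hv : 1 < v) : ContinuousAt iconj v := by
  rw [Metric.continuousAt_iff]
  intro ε hε
  set w := iconj v with hwdef
  obtain ⟨hw1, hweq⟩ := iconj_spec hv
  set ε' := min (ε/2) ((w-1)/2) with hε'
  have hε'0 : 0 < ε' := by
    apply lt_min (by linarith)
    linarith
  have hwe1 : 1 < w - ε' := by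
    have : ε' ≤ (w-1)/2 := min_le_right _ _
    linarith
  have h1 : nuF (w - ε') < v := by
    rw [← hweq]
    exact nuF_strictMonoOn (Set.mem_Ici.2 (le_of_lt hwe1)) (Set.mem_Ici.2 (le_of_lt hw1)) (by linarith)
  have h2 : v < nuF (w + ε') := by
    rw [← hweq]
    exact nuF_strictMonoOn (Set.mem_Ici.2 (le_of_lt hw1)) (Set.mem_Ici.2 (by linarith)) (by linarith)
  have hnm1 : 1 < nuF (w - ε') := by
    have := nuF_strictMonoOn (Set.mem_Ici.2 (le_refl 1)) (Set.mem_Ici.2 (le_of_lt hwe1)) hwe1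
    rwa [nuF_one] at this
  refine ⟨min (v - nuF (w - ε')) (nuF (w + ε') - v), lt_min (by linarith) (by linarith), ?_⟩
  intro y hy
  rw [Real.dist_eq] at hy
  have habs := abs_lt.1 hy
  have hm1 := min_le_left (v - nuF (w - ε')) (nuF (w + ε') - v)
  have hm2 := min_le_right (v - nuF (w - ε')) (nuF (w + ε') - v)
  have hy1 : nuF (w - ε') < y := by linarith [habs.1]
  have hy2 : y < nuF (w + ε') := by linarith [habs.2]
  have hy1' : 1 < y := lt_trans hnm1 hy1
  obtain ⟨hiy1, hiyeq⟩ := iconj_spec hy1'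
  have ha : w - ε' < iconj y := by
    by_contra hc
    push_neg at hc
    rcases eq_or_lt_of_le hc with h | h
    · have := congrArg nuF h
      rw [hiyeq] at this; linarith
    · have := nuF_strictMonoOn (Set.mem_Ici.2 (le_of_lt hiy1)) (Set.mem_Ici.2 (le_of_lt hwe1)) h
      rw [hiyeq] at this; linarith
  have hb : iconj y < w + ε' := by
    by_contra hc
    push_neg at hc
    rcases eq_or_lt_of_le hc with h | h
    · have := congrArg nuF h
      rw [hiyeq] at this; linarith
    · have := nuF_strictMonoOn (Set.mem_Ici.2 (by linarith : (1:ℝ) ≤ w + ε')) (Set.mem_Ici.2 (le_of_lt hiy1)) h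
      rw [hiyeq] at this; linarith
  rw [Real.dist_eq, abs_lt]
  have hε'ε : ε' ≤ ε/2 := min_le_left _ _
  constructor <;> linarith

lemma iconj_hasDerivAt {v : ℝ} (hv : 1 < v) : HasDerivAt iconj (1 - 1/(iconj v))⁻¹ v := by
  obtain ⟨hw1, hweq⟩ := iconj_spec hv
  apply HasDerivAt.of_local_left_inverse (iconj_continuousAt hv)
    (nuF_hasDerivAt (by linarith : (0:ℝ) < iconj v))
  · intro h
    have : 1/(iconj v) < 1 := by
      rw [div_lt_one (by linarith)]; linarith
    linarith [h]
  · filter_upwards [eventually_gt_nhds hv] with y hy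
    exact (iconj_spec hy).2

/-- the conjugate point: for `t ∈ (0,1)`, `tconj t > 1` and `nuF (tconj t) = nuF t`. -/
def tconj (t : ℝ) : ℝ := iconj (nuF t)

lemma tconj_spec {t : ℝ} (h0 : 0 < t) (h1 : t < 1) : 1 < tconj t ∧ nuF (tconj t) = nuF t :=
  iconj_spec (nuF_gt_one h0 h1)

lemma tconj_hasDerivAt {t : ℝ} (h0 : 0 < t) (h1 : t < 1) :
    HasDerivAt tconj ((1 - 1/(tconj t))⁻¹ * (1 - 1/t)) t := by
  have hnu : 1 < nuF t := nuF_gt_one h0 h1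
  have h := (iconj_hasDerivAt hnu).comp t (nuF_hasDerivAt h0)
  exact h

lemma tconj_mul_le_one {t : ℝ} (h0 : 0 < t) (h1 : t < 1) : t * tconj t ≤ 1 := by
  obtain ⟨hw1, hweq⟩ := tconj_spec h0 h1
  set w := tconj t
  have hw0 : (0:ℝ) < w := by linarith
  have hkey : nuF (1/w) ≤ nuF w := by
    have h2 := two_log_le (le_of_lt hw1)
    have : nuF (1/w) = 1/w + Real.log w := by
      rw [nuF, one_div, Real.log_inv]; ring
    rw [this, nuF]
    linarith
  rw [hweq] at hkey
  -- nuF (1/w) ≤ nuF t, both in Ioc 0 1, antitone ⟹ t ≤ 1/w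
  by_contra hc
  push_neg at hc
  have hinv : 1/w < t := by
    rw [div_lt_iff₀ hw0]; linarith [hc]
  have := nuF_strictAntiOn (Set.mem_Ioc.2 ⟨by positivity, by rw [div_le_one hw0]; linarith⟩)
    (Set.mem_Ioc.2 ⟨h0, le_of_lt h1⟩) hinv
  linarith

lemma tconj_strictAntiOn : StrictAntiOn tconj (Set.Ioo (0:ℝ) 1) := by
  intro a ha b hb hab
  have hnua : 1 < nuF a := nuF_gt_one ha.1 ha.2
  have hnub : 1 < nuF b := nuF_gt_one hb.1 hb.2
  have : nuF b < nuF a := nuF_strictAntiOn (Set.mem_Ioc.2 ⟨ha.1, le_of_lt ha.2⟩)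
    (Set.mem_Ioc.2 ⟨hb.1, le_of_lt hb.2⟩) hab
  exact iconj_lt_iconj hnub this

lemma tconj_image : tconj '' (Set.Ioo (0:ℝ) 1) = Set.Ioi (1:ℝ) := by
  apply Set.Subset.antisymm
  · rintro w ⟨t, ht, rfl⟩
    exact Set.mem_Ioi.2 (tconj_spec ht.1 ht.2).1
  · intro w hw
    rw [Set.mem_Ioi] at hw
    set v := nuF w with hv
    have hv1 : 1 < v := by
      have := nuF_strictMonoOn (Set.mem_Ici.2 (le_refl 1)) (Set.mem_Ici.2 (le_of_lt hw)) hw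
      rwa [nuF_one] at this
    -- find t ∈ (0,1) with nuF t = v, via IVT on [exp(-v), 1]
    have he1 : Real.exp (-v) < 1 := by
      rw [Real.exp_lt_one_iff]; linarith
    have hcont : ContinuousOn nuF (Set.Icc (Real.exp (-v)) 1) := by
      intro x hx
      exact (nuF_continuousAt (lt_of_lt_of_le (Real.exp_pos _) hx.1)).continuousWithinAt
    have hnuexp : v ≤ nuF (Real.exp (-v)) := by
      rw [nuF, Real.log_exp]
      have := Real.exp_pos (-v)
      linarith
    have hmem : v ∈ Set.Icc (nuF 1) (nuF (Real.exp (-v))) := by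
      rw [nuF_one]; exact ⟨le_of_lt hv1, hnuexp⟩
    obtain ⟨t, ht, hteq⟩ := intermediate_value_Icc' (le_of_lt he1) hcont hmem
    have ht0 : 0 < t := lt_of_lt_of_le (Real.exp_pos _) ht.1
    have ht1 : t < 1 := by
      rcases eq_or_lt_of_le ht.2 with h | h
      · exfalso; rw [h, nuF_one] at hteq; linarith
      · exact h
    refine ⟨t, Set.mem_Ioo.2 ⟨ht0, ht1⟩, ?_⟩
    obtain ⟨hc1, hc2⟩ := tconj_spec ht0 ht1
    apply nuF_inj_upper (le_of_lt hc1) (le_of_lt hw)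
    rw [hc2, hteq]


/-- the gamma-type integrand scaled: `κ_s(t) = t^(s-1) e^(-st)`. -/
def kap (s t : ℝ) : ℝ := t ^ (s - 1) * Real.exp (-(s * t))

def gw (t : ℝ) : ℝ := (1 - t) / (tconj t - 1)

def fw (d t : ℝ) : ℝ := (t * Real.exp (-t)) ^ d

lemma te_mono {t u : ℝ} (ht : 0 ≤ t) (htu : t ≤ u) (hu : u ≤ 1) :
    t * Real.exp (-t) ≤ u * Real.exp (-u) := by
  rcases eq_or_lt_of_le (le_trans ht htu) with h1 | hu0
  · have hu0' : u = 0 := h1.symm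
    have ht0 : t = 0 := le_antisymm (hu0' ▸ htu) ht
    rw [ht0, hu0']
  · have key : t ≤ u * Real.exp (t - u) := by
      have h1 : 1 - (u - t)/u ≤ Real.exp (-((u - t)/u)) := by
        have := Real.add_one_le_exp (-((u - t)/u))
        linarith
      have h2 : Real.exp (-((u - t)/u)) ≤ Real.exp (t - u) := by
        apply Real.exp_le_exp.2
        have h5 : (u - t) ≤ (u - t)/u := by
          rw [le_div_iff₀ hu0]
          nlinarith
        linarith
      have h3 : t/u = 1 - (u - t)/u := by field_simp; ring
      have h4 : t/u ≤ Real.exp (t - u) := by rw [h3]; linarith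
      rw [div_le_iff₀ hu0] at h4
      linarith [h4]
    calc t * Real.exp (-t) ≤ u * Real.exp (t - u) * Real.exp (-t) :=
          mul_le_mul_of_nonneg_right key (le_of_lt (Real.exp_pos _))
    _ = u * Real.exp (-u) := by
        rw [mul_assoc, ← Real.exp_add]
        ring_nf

lemma fw_monotoneOn {d : ℝ} (hd : 0 ≤ d) : MonotoneOn (fw d) (Set.Ioo (0:ℝ) 1) := by
  intro t ht u hu htu
  exact Real.rpow_le_rpow (mul_nonneg (le_of_lt ht.1) (le_of_lt (Real.exp_pos _)))
    (te_mono (le_of_lt ht.1) htu (le_of_lt hu.2)) hd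

lemma fw_nonneg {d t : ℝ} (ht : 0 ≤ t) : 0 ≤ fw d t :=
  Real.rpow_nonneg (mul_nonneg ht (le_of_lt (Real.exp_pos _))) d

lemma fw_le_one {d t : ℝ} (hd : 0 ≤ d) (h0 : 0 ≤ t) (h1 : t ≤ 1) : fw d t ≤ 1 := by
  apply Real.rpow_le_one (mul_nonneg h0 (le_of_lt (Real.exp_pos _))) _ hd
  have h2 : Real.exp (-t) ≤ 1 := by rw [Real.exp_le_one_iff]; linarith
  nlinarith [Real.exp_pos (-t)]

lemma tconj_deriv_eq {t : ℝ} (h0 : 0 < t) (h1 : t < 1) :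
    (1 - 1/(tconj t))⁻¹ * (1 - 1/t) = -((1 - t) * tconj t / (t * (tconj t - 1))) := by
  obtain ⟨hw1, _⟩ := tconj_spec h0 h1
  have hw0 : (0:ℝ) < tconj t := by linarith
  field_simp
  ring

lemma tconj_deriv_neg {t : ℝ} (h0 : 0 < t) (h1 : t < 1) :
    (1 - 1/(tconj t))⁻¹ * (1 - 1/t) < 0 := by
  obtain ⟨hw1, _⟩ := tconj_spec h0 h1
  rw [tconj_deriv_eq h0 h1]
  have hw0 : (0:ℝ) < tconj t := by linarith
  have : 0 < (1 - t) * tconj t / (t * (tconj t - 1)) := by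
    apply div_pos (by nlinarith) (by nlinarith)
  linarith

lemma gw_hasDerivAt {t : ℝ} (h0 : 0 < t) (h1 : t < 1) :
    HasDerivAt gw
      (((-1) * (tconj t - 1) - (1 - t) * ((1 - 1/(tconj t))⁻¹ * (1 - 1/t))) / (tconj t - 1)^2) t := by
  obtain ⟨hw1, _⟩ := tconj_spec h0 h1
  have h := ((hasDerivAt_const t (1:ℝ)).sub (hasDerivAt_id t)).div
    ((tconj_hasDerivAt h0 h1).sub (hasDerivAt_const t 1)) (by intro h; simp only [Pi.sub_apply, sub_eq_zero] at h; linarith [h])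
  exact (show HasDerivAt gw _ t from h).congr_deriv (by simp only [Pi.sub_apply, id_eq]; ring)

lemma gw_deriv_nonneg {t : ℝ} (h0 : 0 < t) (h1 : t < 1) :
    0 ≤ ((-1) * (tconj t - 1) - (1 - t) * ((1 - 1/(tconj t))⁻¹ * (1 - 1/t))) / (tconj t - 1)^2 := by
  obtain ⟨hw1, _⟩ := tconj_spec h0 h1
  set w := tconj t with hw
  have hw0 : (0:ℝ) < w := by linarith
  have htw : t * w ≤ 1 := tconj_mul_le_one h0 h1
  apply div_nonneg _ (by positivity)
  rw [tconj_deriv_eq h0 h1, ← hw]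
  have ht' : t ≠ 0 := ne_of_gt h0
  have hw1' : w - 1 ≠ 0 := by intro h; rw [sub_eq_zero] at h; linarith
  have htw1 : t * (w - 1) ≠ 0 := mul_ne_zero ht' hw1'
  have key : (-1) * (w - 1) - (1 - t) * (-((1 - t) * w / (t * (w - 1)))) =
      ((1 - t*w) * (w - t)) / (t * (w - 1)) := by
    field_simp
    ring
  rw [key]
  apply div_nonneg
  · nlinarith
  · nlinarith

lemma gw_monotoneOn : MonotoneOn gw (Set.Ioo (0:ℝ) 1) := by
  apply monotoneOn_of_deriv_nonneg (convex_Ioo 0 1)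
  · intro x hx
    exact (gw_hasDerivAt hx.1 hx.2).continuousAt.continuousWithinAt
  · intro x hx
    rw [isOpen_Ioo.interior_eq] at hx
    exact (gw_hasDerivAt hx.1 hx.2).differentiableAt.differentiableWithinAt
  · intro x hx
    rw [isOpen_Ioo.interior_eq] at hx
    rw [(gw_hasDerivAt hx.1 hx.2).deriv]
    exact gw_deriv_nonneg hx.1 hx.2

lemma gw_pos {t : ℝ} (h0 : 0 < t) (h1 : t < 1) : 0 < gw t := by
  obtain ⟨hw1, _⟩ := tconj_spec h0 h1
  exact div_pos (by linarith) (by linarith)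

lemma mul_exp_eq {t : ℝ} (h0 : 0 < t) (h1 : t < 1) :
    tconj t * Real.exp (-(tconj t)) = t * Real.exp (-t) := by
  obtain ⟨hw1, hweq⟩ := tconj_spec h0 h1
  have hw0 : (0:ℝ) < tconj t := by linarith
  have : Real.log (tconj t) - tconj t = Real.log t - t := by
    simp only [nuF] at hweq; linarith
  calc tconj t * Real.exp (-(tconj t)) = Real.exp (Real.log (tconj t) - tconj t) := by
        rw [Real.exp_sub, Real.exp_log hw0]; rw [Real.exp_neg]; ring
  _ = Real.exp (Real.log t - t) := by rw [this]
  _ = t * Real.exp (-t) := by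
        rw [Real.exp_sub, Real.exp_log h0]; rw [Real.exp_neg]; ring

lemma rpow_exp_mul {x s : ℝ} (hx : 0 < x) : (x * Real.exp (-x)) ^ s = x ^ s * Real.exp (-(s*x)) := by
  rw [Real.mul_rpow (le_of_lt hx) (le_of_lt (Real.exp_pos _))]
  congr 1
  rw [Real.rpow_def_of_pos (Real.exp_pos _), Real.log_exp]
  ring_nf

/-- the key pointwise pullback identity. -/
lemma pullback_eq {s t : ℝ} (h0 : 0 < t) (h1 : t < 1) :
    |(1 - 1/(tconj t))⁻¹ * (1 - 1/t)| * kap s (tconj t) = kap s t * gw t := by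
  obtain ⟨hw1, hweq⟩ := tconj_spec h0 h1
  set w := tconj t with hwdef
  have hw0 : (0:ℝ) < w := by linarith
  have habs : |(1 - 1/w)⁻¹ * (1 - 1/t)| = (1 - t) * w / (t * (w - 1)) := by
    rw [abs_of_neg (tconj_deriv_neg h0 h1), tconj_deriv_eq h0 h1]
    ring
  rw [habs]
  have hkapw : kap s w = (w * Real.exp (-w))^s / w := by
    rw [rpow_exp_mul hw0, kap]
    rw [show s - 1 = s + (-1) by ring, Real.rpow_add hw0, Real.rpow_neg_one]
    field_simp
  have hkapt : kap s t = (t * Real.exp (-t))^s / t := by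
    rw [rpow_exp_mul h0, kap]
    rw [show s - 1 = s + (-1) by ring, Real.rpow_add h0, Real.rpow_neg_one]
    field_simp
  rw [hkapw, hkapt, mul_exp_eq h0 h1, gw, ← hwdef]
  have ht' : t ≠ 0 := ne_of_gt h0
  have hw' : w ≠ 0 := ne_of_gt hw0
  have hw1' : w - 1 ≠ 0 := by intro h; rw [sub_eq_zero] at h; linarith
  field_simp

/-- change of variables : integral over `(1,∞)` equals weighted integral over `(0,1)`. -/
lemma cov_integral (G : ℝ → ℝ) :
    ∫ t in Set.Ioi (1:ℝ), G t = ∫ t in Set.Ioo (0:ℝ) 1,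
      |(1 - 1/(tconj t))⁻¹ * (1 - 1/t)| * G (tconj t) := by
  have h := MeasureTheory.integral_image_eq_integral_abs_deriv_smul (f := tconj)
    (f' := fun t => (1 - 1/(tconj t))⁻¹ * (1 - 1/t)) measurableSet_Ioo
    (fun x hx => (tconj_hasDerivAt hx.1 hx.2).hasDerivWithinAt) (tconj_strictAntiOn.injOn) G
  rw [tconj_image] at h
  simpa using h

lemma cov_kap (s : ℝ) :
    ∫ t in Set.Ioi (1:ℝ), kap s t = ∫ t in Set.Ioo (0:ℝ) 1, kap s t * gw t := by
  rw [cov_integral (kap s)]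
  apply MeasureTheory.setIntegral_congr_fun measurableSet_Ioo
  intro t ht
  exact pullback_eq ht.1 ht.2


lemma kap_measurable (s : ℝ) : Measurable (kap s) := by
  apply Measurable.mul
  · measurability
  · exact Real.measurable_exp.comp ((measurable_const_mul s).neg)

lemma kap_nonneg {s t : ℝ} (ht : 0 ≤ t) : 0 ≤ kap s t :=
  mul_nonneg (Real.rpow_nonneg ht _) (le_of_lt (Real.exp_pos _))

lemma kap_integrableOn_Ioi0 {s : ℝ} (hs : 0 < s) : IntegrableOn (kap s) (Set.Ioi (0:ℝ)) := by
  have hG := Real.GammaIntegral_convergent hs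
  have himg : (fun τ : ℝ => s * τ) '' (Set.Ioi 0) = Set.Ioi (0:ℝ) := by
    ext x
    constructor
    · rintro ⟨τ, hτ, rfl⟩; exact mul_pos hs hτ
    · intro hx; exact ⟨x / s, div_pos hx hs, by field_simp⟩
  have hderiv : ∀ x ∈ Set.Ioi (0:ℝ), HasDerivWithinAt (fun τ : ℝ => s * τ) s (Set.Ioi 0) x := by
    intro x _
    simpa using ((hasDerivAt_id x).const_mul s).hasDerivWithinAt
  have hinj : Set.InjOn (fun τ : ℝ => s * τ) (Set.Ioi 0) :=
    fun a _ b _ h => mul_left_cancel₀ (ne_of_gt hs) h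
  have h2 := (MeasureTheory.integrableOn_image_iff_integrableOn_abs_deriv_smul
      measurableSet_Ioi hderiv hinj (fun x => Real.exp (-x) * x ^ (s-1))).1 (by rwa [himg])
  set c : ℝ := s * s ^ (s-1) with hc
  have hc0 : 0 < c := by positivity
  apply MeasureTheory.IntegrableOn.congr_fun (h2.const_mul c⁻¹) _ measurableSet_Ioi
  intro τ hτ
  rw [Set.mem_Ioi] at hτ
  have : Real.exp (-(s*τ)) * (s*τ) ^ (s-1) = s^(s-1) * kap s τ := by
    rw [Real.mul_rpow (le_of_lt hs) (le_of_lt hτ), kap]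
    ring
  simp only [smul_eq_mul, this, abs_of_pos hs]
  rw [hc]
  field_simp

lemma kap_integrableOn_Ioo {s : ℝ} (hs : 0 < s) : IntegrableOn (kap s) (Set.Ioo (0:ℝ) 1) :=
  (kap_integrableOn_Ioi0 hs).mono_set Set.Ioo_subset_Ioi_self

lemma kap_integrableOn_Ioi1 {s : ℝ} (hs : 0 < s) : IntegrableOn (kap s) (Set.Ioi (1:ℝ)) :=
  (kap_integrableOn_Ioi0 hs).mono_set (Set.Ioi_subset_Ioi zero_le_one)

lemma kapg_integrableOn {s : ℝ} (hs : 0 < s) :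
    IntegrableOn (fun t => kap s t * gw t) (Set.Ioo (0:ℝ) 1) := by
  have h := (MeasureTheory.integrableOn_image_iff_integrableOn_abs_deriv_smul
      (f := tconj) (f' := fun t => (1 - 1/(tconj t))⁻¹ * (1 - 1/t)) measurableSet_Ioo
      (fun x hx => (tconj_hasDerivAt hx.1 hx.2).hasDerivWithinAt) tconj_strictAntiOn.injOn
      (kap s)).1 (by rw [tconj_image]; exact kap_integrableOn_Ioi1 hs)
  apply MeasureTheory.IntegrableOn.congr_fun h _ measurableSet_Ioo
  intro t ht
  simpa using pullback_eq (s := s) ht.1 ht.2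

lemma gw_continuousOn : ContinuousOn gw (Set.Ioo (0:ℝ) 1) := fun t ht =>
  (gw_hasDerivAt ht.1 ht.2).continuousAt.continuousWithinAt

lemma fw_measurable (d : ℝ) : Measurable (fw d) := by
  have h1 : Measurable fun y : ℝ => y ^ d := by measurability
  exact h1.comp (measurable_id.mul (Real.measurable_exp.comp measurable_neg))

lemma kapf_integrableOn {s d : ℝ} (hs : 0 < s) (hd : 0 ≤ d) :
    IntegrableOn (fun t => kap s t * fw d t) (Set.Ioo (0:ℝ) 1) := by
  apply MeasureTheory.Integrable.mono' (kap_integrableOn_Ioo hs)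
  · apply AEMeasurable.aestronglyMeasurable
    apply Measurable.aemeasurable
    exact (kap_measurable s).mul (fw_measurable d)
  · filter_upwards [MeasureTheory.ae_restrict_mem measurableSet_Ioo] with t ht
    rw [Real.norm_eq_abs, abs_of_nonneg (mul_nonneg (kap_nonneg (le_of_lt ht.1)) (fw_nonneg (le_of_lt ht.1)))]
    calc kap s t * fw d t ≤ kap s t * 1 :=
          mul_le_mul_of_nonneg_left (fw_le_one hd (le_of_lt ht.1) (le_of_lt ht.2)) (kap_nonneg (le_of_lt ht.1))
    _ = kap s t := by ring

lemma kapfg_integrableOn {s d : ℝ} (hs : 0 < s) (hd : 0 ≤ d) :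
    IntegrableOn (fun t => kap s t * fw d t * gw t) (Set.Ioo (0:ℝ) 1) := by
  apply MeasureTheory.Integrable.mono' (kapg_integrableOn hs)
  · apply AEMeasurable.aestronglyMeasurable
    apply AEMeasurable.mul
    · exact ((kap_measurable s).mul (fw_measurable d)).aemeasurable
    · exact gw_continuousOn.aemeasurable measurableSet_Ioo
  · filter_upwards [MeasureTheory.ae_restrict_mem measurableSet_Ioo] with t ht
    have h1 : 0 ≤ kap s t := kap_nonneg (le_of_lt ht.1)
    have h2 : 0 ≤ fw d t := fw_nonneg (le_of_lt ht.1)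
    have h3 : 0 ≤ gw t := le_of_lt (gw_pos ht.1 ht.2)
    rw [Real.norm_eq_abs, abs_of_nonneg (by positivity)]
    calc kap s t * fw d t * gw t ≤ kap s t * 1 * gw t := by
          apply mul_le_mul_of_nonneg_right _ h3
          exact mul_le_mul_of_nonneg_left (fw_le_one hd (le_of_lt ht.1) (le_of_lt ht.2)) h1
    _ = kap s t * gw t := by ring

/-- Chebyshev correlation inequality for our specific setting. -/
lemma cheb_main {s d : ℝ} (hs : 0 < s) (hd : 0 ≤ d) :
    (∫ t in Set.Ioo (0:ℝ) 1, kap s t * fw d t) * (∫ t in Set.Ioo (0:ℝ) 1, kap s t * gw t) ≤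
    (∫ t in Set.Ioo (0:ℝ) 1, kap s t) * (∫ t in Set.Ioo (0:ℝ) 1, kap s t * fw d t * gw t) := by
  set μ := MeasureTheory.volume.restrict (Set.Ioo (0:ℝ) 1) with hμ
  have int1 : Integrable (kap s) μ := kap_integrableOn_Ioo hs
  have int2 : Integrable (fun t => kap s t * fw d t) μ := kapf_integrableOn hs hd
  have int3 : Integrable (fun t => kap s t * gw t) μ := kapg_integrableOn hs
  have int4 : Integrable (fun t => kap s t * fw d t * gw t) μ := kapfg_integrableOn hs hd
  have key : 0 ≤ ∫ z : ℝ × ℝ, ((kap s z.1 * fw d z.1 * gw z.1) * kap s z.2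
      - (kap s z.1 * fw d z.1) * (kap s z.2 * gw z.2)
      - (kap s z.1 * gw z.1) * (kap s z.2 * fw d z.2)
      + kap s z.1 * (kap s z.2 * fw d z.2 * gw z.2)) ∂(μ.prod μ) := by
    apply MeasureTheory.integral_nonneg_of_ae
    have hprod : μ.prod μ = (MeasureTheory.volume.prod MeasureTheory.volume).restrict
        ((Set.Ioo (0:ℝ) 1) ×ˢ (Set.Ioo (0:ℝ) 1)) := by
      rw [hμ, MeasureTheory.Measure.prod_restrict]
    rw [hprod]
    filter_upwards [MeasureTheory.ae_restrict_mem (measurableSet_Ioo.prod measurableSet_Ioo)] with z hz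
    obtain ⟨hz1, hz2⟩ := hz
    have hfact : (kap s z.1 * fw d z.1 * gw z.1) * kap s z.2
        - (kap s z.1 * fw d z.1) * (kap s z.2 * gw z.2)
        - (kap s z.1 * gw z.1) * (kap s z.2 * fw d z.2)
        + kap s z.1 * (kap s z.2 * fw d z.2 * gw z.2)
        = kap s z.1 * kap s z.2 * ((fw d z.1 - fw d z.2) * (gw z.1 - gw z.2)) := by ring
    rw [hfact]
    apply mul_nonneg (mul_nonneg (kap_nonneg (le_of_lt hz1.1)) (kap_nonneg (le_of_lt hz2.1)))
    rcases le_total z.1 z.2 with h | h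
    · have hf := fw_monotoneOn hd hz1 hz2 h
      have hg := gw_monotoneOn hz1 hz2 h
      nlinarith [mul_nonneg (sub_nonneg.2 hf) (sub_nonneg.2 hg)]
    · have hf := fw_monotoneOn hd hz2 hz1 h
      have hg := gw_monotoneOn hz2 hz1 h
      exact mul_nonneg (by linarith) (by linarith)
  have expand : ∫ z : ℝ × ℝ, ((kap s z.1 * fw d z.1 * gw z.1) * kap s z.2
      - (kap s z.1 * fw d z.1) * (kap s z.2 * gw z.2)
      - (kap s z.1 * gw z.1) * (kap s z.2 * fw d z.2)
      + kap s z.1 * (kap s z.2 * fw d z.2 * gw z.2)) ∂(μ.prod μ)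
      = (∫ t, kap s t * fw d t * gw t ∂μ) * (∫ t, kap s t ∂μ)
      - (∫ t, kap s t * fw d t ∂μ) * (∫ t, kap s t * gw t ∂μ)
      - (∫ t, kap s t * gw t ∂μ) * (∫ t, kap s t * fw d t ∂μ)
      + (∫ t, kap s t ∂μ) * (∫ t, kap s t * fw d t * gw t ∂μ) := by
    rw [MeasureTheory.integral_add, MeasureTheory.integral_sub, MeasureTheory.integral_sub]
    · rw [MeasureTheory.integral_prod_mul (μ := μ) (ν := μ) (fun t => kap s t * fw d t * gw t) (kap s),
        MeasureTheory.integral_prod_mul (μ := μ) (ν := μ) (fun t => kap s t * fw d t) (fun t => kap s t * gw t),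
        MeasureTheory.integral_prod_mul (μ := μ) (ν := μ) (fun t => kap s t * gw t) (fun t => kap s t * fw d t),
        MeasureTheory.integral_prod_mul (μ := μ) (ν := μ) (kap s) (fun t => kap s t * fw d t * gw t)]
    · exact int4.mul_prod int1
    · exact int2.mul_prod int3
    · exact (int4.mul_prod int1).sub (int2.mul_prod int3)
    · exact int3.mul_prod int2
    · exact ((int4.mul_prod int1).sub (int2.mul_prod int3)).sub (int3.mul_prod int2)
    · exact int1.mul_prod int4
  rw [expand] at key
  linarith


lemma kap_split {a d t : ℝ} (ht : 0 < t) :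
    kap (a + d) t = kap a t * fw d t := by
  rw [kap, kap, fw, rpow_exp_mul ht]
  rw [show a + d - 1 = (a - 1) + d by ring, Real.rpow_add ht]
  rw [show -((a+d)*t) = -(a*t) + -(d*t) by ring, Real.exp_add]
  ring

/-- the x = 1 core comparison. -/
lemma NM_compare {a b : ℝ} (ha : 0 < a) (hab : a ≤ b) :
    (∫ t in Set.Ioo (0:ℝ) 1, kap b t) * (∫ t in Set.Ioi (1:ℝ), kap a t) ≤
    (∫ t in Set.Ioo (0:ℝ) 1, kap a t) * (∫ t in Set.Ioi (1:ℝ), kap b t) := by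
  set d := b - a with hd
  have hd0 : 0 ≤ d := by linarith
  have hb : b = a + d := by ring
  have hNb : (∫ t in Set.Ioo (0:ℝ) 1, kap b t) = ∫ t in Set.Ioo (0:ℝ) 1, kap a t * fw d t := by
    apply MeasureTheory.setIntegral_congr_fun measurableSet_Ioo
    intro t htmem
    rw [hb]; exact kap_split htmem.1
  have hMa : (∫ t in Set.Ioi (1:ℝ), kap a t) = ∫ t in Set.Ioo (0:ℝ) 1, kap a t * gw t := cov_kap a
  have hMb : (∫ t in Set.Ioi (1:ℝ), kap b t) = ∫ t in Set.Ioo (0:ℝ) 1, kap a t * fw d t * gw t := by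
    rw [cov_kap b]
    apply MeasureTheory.setIntegral_congr_fun measurableSet_Ioo
    intro t htmem
    show kap b t * gw t = kap a t * fw d t * gw t
    rw [hb, kap_split htmem.1]
  rw [hNb, hMa, hMb]
  exact cheb_main ha hd0

/-- lower incomplete-gamma-type integral, in the exact form of the problem statement. -/
def lamI (s x : ℝ) : ℝ := ∫ t in Set.Ioo (0:ℝ) x, t ^ (s-1) * Real.exp (-t)

def upI (s : ℝ) : ℝ := ∫ t in Set.Ioi s, t ^ (s-1) * Real.exp (-t)

lemma scale_image_Ioo {s : ℝ} (hs : 0 < s) :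
    (fun τ : ℝ => s * τ) '' (Set.Ioo 0 1) = Set.Ioo (0:ℝ) s := by
  ext x
  constructor
  · rintro ⟨τ, hτ, rfl⟩
    refine ⟨mul_pos hs hτ.1, ?_⟩
    show s * τ < s
    nlinarith [hτ.2, hτ.1]
  · intro hx
    refine ⟨x / s, ⟨div_pos hx.1 hs, (div_lt_one hs).2 hx.2⟩, by field_simp⟩

lemma scale_image_Ioi {s : ℝ} (hs : 0 < s) :
    (fun τ : ℝ => s * τ) '' (Set.Ioi 1) = Set.Ioi s := by
  ext x
  constructor
  · rintro ⟨τ, hτ, rfl⟩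
    rw [Set.mem_Ioi] at hτ
    show s < s * τ
    nlinarith
  · intro hx
    rw [Set.mem_Ioi] at hx
    refine ⟨x / s, ?_, by field_simp⟩
    rw [Set.mem_Ioi, lt_div_iff₀ hs]
    linarith

lemma scale_deriv {s : ℝ} (S : Set ℝ) :
    ∀ x ∈ S, HasDerivWithinAt (fun τ : ℝ => s * τ) s S x := by
  intro x _
  simpa using ((hasDerivAt_id x).const_mul s).hasDerivWithinAt

lemma scale_inj {s : ℝ} (hs : 0 < s) (S : Set ℝ) : Set.InjOn (fun τ : ℝ => s * τ) S :=
  fun u _ v _ h => mul_left_cancel₀ (ne_of_gt hs) h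

lemma scale_integrand {s τ : ℝ} (hs : 0 < s) (hτ : 0 < τ) :
    |s| • ((s * τ) ^ (s-1) * Real.exp (-(s * τ))) = s ^ s * kap s τ := by
  rw [smul_eq_mul, abs_of_pos hs, Real.mul_rpow (le_of_lt hs) (le_of_lt hτ), kap]
  rw [show (s:ℝ) ^ s = s ^ (s - 1) * s by
    rw [← Real.rpow_add_one (ne_of_gt hs)]; ring_nf]
  ring

lemma lamI_scale {s : ℝ} (hs : 0 < s) :
    lamI s s = s ^ s * ∫ t in Set.Ioo (0:ℝ) 1, kap s t := by
  rw [lamI, ← scale_image_Ioo hs,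
    MeasureTheory.integral_image_eq_integral_abs_deriv_smul measurableSet_Ioo
      (scale_deriv _) (scale_inj hs _) (fun t => t ^ (s-1) * Real.exp (-t))]
  rw [← MeasureTheory.integral_const_mul]
  apply MeasureTheory.setIntegral_congr_fun measurableSet_Ioo
  intro τ hτ
  exact scale_integrand hs hτ.1

lemma upI_scale {s : ℝ} (hs : 0 < s) :
    upI s = s ^ s * ∫ t in Set.Ioi (1:ℝ), kap s t := by
  rw [upI, ← scale_image_Ioi hs,
    MeasureTheory.integral_image_eq_integral_abs_deriv_smul measurableSet_Ioi
      (scale_deriv _) (scale_inj hs _) (fun t => t ^ (s-1) * Real.exp (-t))]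
  rw [← MeasureTheory.integral_const_mul]
  apply MeasureTheory.setIntegral_congr_fun measurableSet_Ioi
  intro τ hτ
  exact scale_integrand hs (lt_trans one_pos hτ)

lemma gammaIntegrand_integrableOn {s : ℝ} (hs : 0 < s) :
    IntegrableOn (fun t : ℝ => t ^ (s-1) * Real.exp (-t)) (Set.Ioi (0:ℝ)) := by
  apply MeasureTheory.IntegrableOn.congr_fun (Real.GammaIntegral_convergent hs) _ measurableSet_Ioi
  intro t _
  ring

lemma Gamma_split {s : ℝ} (hs : 0 < s) : Real.Gamma s = lamI s s + upI s := by
  have hint := gammaIntegrand_integrableOn hs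
  have hsplit : Set.Ioc (0:ℝ) s ∪ Set.Ioi s = Set.Ioi (0:ℝ) := Set.Ioc_union_Ioi_eq_Ioi (le_of_lt hs)
  have hdisj : Disjoint (Set.Ioc (0:ℝ) s) (Set.Ioi s) := Set.Ioc_disjoint_Ioi le_rfl
  rw [Real.Gamma_eq_integral hs]
  have hcomm : (∫ t in Set.Ioi (0:ℝ), Real.exp (-t) * t ^ (s-1)) =
      ∫ t in Set.Ioi (0:ℝ), t ^ (s-1) * Real.exp (-t) := by
    apply MeasureTheory.setIntegral_congr_fun measurableSet_Ioi
    intro t _; ring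
  rw [hcomm, ← hsplit, MeasureTheory.setIntegral_union hdisj measurableSet_Ioi
    (hint.mono_set (by rw [← hsplit]; exact Set.subset_union_left))
    (hint.mono_set (by rw [← hsplit]; exact Set.subset_union_right))]
  congr 1
  rw [lamI, MeasureTheory.integral_Ioc_eq_integral_Ioo]

lemma lamI_nonneg {s x : ℝ} : 0 ≤ lamI s x := by
  apply MeasureTheory.setIntegral_nonneg measurableSet_Ioo
  intro t ht
  exact mul_nonneg (Real.rpow_nonneg (le_of_lt ht.1) _) (le_of_lt (Real.exp_pos _))

lemma upI_nonneg {s : ℝ} (hs : 0 < s) : 0 ≤ upI s := by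
  apply MeasureTheory.setIntegral_nonneg measurableSet_Ioi
  intro t ht
  have : (0:ℝ) < t := lt_trans hs ht
  exact mul_nonneg (Real.rpow_nonneg (le_of_lt this) _) (le_of_lt (Real.exp_pos _))

/-- the x = 1 case in incomplete-gamma form. -/
lemma caseA {a b : ℝ} (ha : 0 < a) (hab : a ≤ b) :
    lamI b b * Real.Gamma a ≤ lamI a a * Real.Gamma b := by
  have hb : 0 < b := lt_of_lt_of_le ha hab
  have key : lamI b b * upI a ≤ lamI a a * upI b := by
    rw [lamI_scale ha, lamI_scale hb, upI_scale ha, upI_scale hb]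
    have h1 : (0:ℝ) < a ^ a := Real.rpow_pos_of_pos ha a
    have h2 : (0:ℝ) < b ^ b := Real.rpow_pos_of_pos hb b
    calc b ^ b * (∫ t in Set.Ioo (0:ℝ) 1, kap b t) * (a ^ a * ∫ t in Set.Ioi (1:ℝ), kap a t)
        = (a^a * b^b) * ((∫ t in Set.Ioo (0:ℝ) 1, kap b t) * ∫ t in Set.Ioi (1:ℝ), kap a t) := by ring
    _ ≤ (a^a * b^b) * ((∫ t in Set.Ioo (0:ℝ) 1, kap a t) * ∫ t in Set.Ioi (1:ℝ), kap b t) := by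
        apply mul_le_mul_of_nonneg_left (NM_compare ha hab) (by positivity)
    _ = a ^ a * (∫ t in Set.Ioo (0:ℝ) 1, kap a t) * (b ^ b * ∫ t in Set.Ioi (1:ℝ), kap b t) := by ring
  rw [Gamma_split ha, Gamma_split hb]
  nlinarith [lamI_nonneg (s := a) (x := a), lamI_nonneg (s := b) (x := b), key]


lemma gInt_measurable (s : ℝ) : Measurable (fun t : ℝ => t ^ (s-1) * Real.exp (-t)) := by
  apply Measurable.mul
  · measurability
  · exact Real.measurable_exp.comp measurable_neg

lemma gInt_intervalIntegrable {s y : ℝ} (hs : 0 < s) (hy : 0 ≤ y) :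
    IntervalIntegrable (fun t : ℝ => t ^ (s-1) * Real.exp (-t)) MeasureTheory.volume 0 y := by
  rw [intervalIntegrable_iff_integrableOn_Ioc_of_le hy]
  exact (gammaIntegrand_integrableOn hs).mono_set Set.Ioc_subset_Ioi_self

lemma lamI_eq_interval {s y : ℝ} (hy : 0 ≤ y) :
    lamI s y = ∫ t in (0:ℝ)..y, t ^ (s-1) * Real.exp (-t) := by
  rw [intervalIntegral.integral_of_le hy, MeasureTheory.integral_Ioc_eq_integral_Ioo, lamI]

lemma lamI_hasDerivAt {s y : ℝ} (hs : 0 < s) (hy : 0 < y) :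
    HasDerivAt (lamI s) (y ^ (s-1) * Real.exp (-y)) y := by
  have hF : HasDerivAt (fun u => ∫ t in (0:ℝ)..u, t ^ (s-1) * Real.exp (-t))
      (y ^ (s-1) * Real.exp (-y)) y := by
    apply intervalIntegral.integral_hasDerivAt_right (gInt_intervalIntegrable hs (le_of_lt hy))
    · exact ⟨Set.univ, Filter.univ_mem, ((gInt_measurable s).aestronglyMeasurable).restrict⟩
    · apply ContinuousAt.mul
      · exact Real.continuousAt_rpow_const y (s-1) (Or.inl (ne_of_gt hy))
      · exact Real.continuous_exp.continuousAt.comp (continuous_neg.continuousAt)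
  apply (Filter.EventuallyEq.hasDerivAt_iff ?_).1 hF
  filter_upwards [eventually_gt_nhds hy] with u hu
  exact (lamI_eq_interval (le_of_lt hu)).symm

lemma lamI_comp_hasDerivAt {s x : ℝ} (hs : 0 < s) (hx : 0 < x) :
    HasDerivAt (fun x => lamI s (x * s)) ((x*s) ^ (s-1) * Real.exp (-(x*s)) * s) x := by
  exact (lamI_hasDerivAt hs (mul_pos hx hs)).comp x (hasDerivAt_mul_const s)

def Bfun (a b x : ℝ) : ℝ := Real.Gamma a * b ^ b * fw (b - a) x - Real.Gamma b * a ^ a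

def Rfun (a b x : ℝ) : ℝ := lamI b (x*b) * Real.Gamma a - lamI a (x*a) * Real.Gamma b

lemma Rfun_hasDerivAt {a b x : ℝ} (ha : 0 < a) (hb : 0 < b) (hx : 0 < x) :
    HasDerivAt (Rfun a b)
      (x ^ (a-1) * Real.exp (-(a*x)) * Bfun a b x) x := by
  have h1 := (lamI_comp_hasDerivAt hb hx).mul_const (Real.Gamma a)
  have h2 := (lamI_comp_hasDerivAt ha hx).mul_const (Real.Gamma b)
  have h := h1.sub h2
  refine (show HasDerivAt (Rfun a b) _ x from h).congr_deriv (Eq.symm ?_)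
  have e4 : b ^ (b-1) * b = b ^ b := by rw [← Real.rpow_add_one (ne_of_gt hb)]; ring_nf
  have e5 : a ^ (a-1) * a = a ^ a := by rw [← Real.rpow_add_one (ne_of_gt ha)]; ring_nf
  have key1 : (x*b) ^ (b-1) * Real.exp (-(x*b)) * b = b ^ b * kap b x := by
    rw [Real.mul_rpow (le_of_lt hx) (le_of_lt hb), kap, ← e4, show -(x*b) = -(b*x) by ring]
    ring
  have key2 : (x*a) ^ (a-1) * Real.exp (-(x*a)) * a = a ^ a * kap a x := by
    rw [Real.mul_rpow (le_of_lt hx) (le_of_lt ha), kap, ← e5, show -(x*a) = -(a*x) by ring]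
    ring
  have key3 : kap b x = kap a x * fw (b-a) x := by
    have hk := kap_split (a := a) (d := b - a) hx
    rwa [show a + (b - a) = b by ring] at hk
  calc x ^ (a-1) * Real.exp (-(a*x)) * Bfun a b x
      = kap a x * Bfun a b x := by rw [kap]
  _ = b ^ b * (kap a x * fw (b-a) x) * Real.Gamma a - a ^ a * kap a x * Real.Gamma b := by
      rw [Bfun]; ring
  _ = (x*b) ^ (b-1) * Real.exp (-(x*b)) * b * Real.Gamma a
      - (x*a) ^ (a-1) * Real.exp (-(x*a)) * a * Real.Gamma b := by
      rw [key1, key2, key3]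

lemma Bfun_monotoneOn {a b : ℝ} (ha : 0 < a) (hab : a ≤ b) :
    MonotoneOn (Bfun a b) (Set.Ioc (0:ℝ) 1) := by
  intro x hx y hy hxy
  have hmf : fw (b-a) x ≤ fw (b-a) y :=
    Real.rpow_le_rpow (mul_nonneg (le_of_lt hx.1) (le_of_lt (Real.exp_pos _)))
      (te_mono (le_of_lt hx.1) hxy hy.2) (by linarith)
  have hGa : (0:ℝ) < Real.Gamma a := Real.Gamma_pos_of_pos ha
  have hbb : (0:ℝ) < b ^ b := Real.rpow_pos_of_pos (by linarith) b
  rw [Bfun, Bfun]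
  have : Real.Gamma a * b ^ b * fw (b-a) x ≤ Real.Gamma a * b ^ b * fw (b-a) y :=
    mul_le_mul_of_nonneg_left hmf (mul_nonneg (le_of_lt hGa) (le_of_lt hbb))
  linarith

lemma lamI_zero {s : ℝ} : lamI s 0 = 0 := by
  rw [lamI]
  simp

lemma lamI_comp_continuousOn {s : ℝ} (hs : 0 < s) :
    ContinuousOn (fun x => lamI s (x * s)) (Set.Icc (0:ℝ) 1) := by
  have hint : IntegrableOn (fun t : ℝ => t ^ (s-1) * Real.exp (-t)) (Set.Icc 0 s) := by
    rw [integrableOn_Icc_iff_integrableOn_Ioc]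
    exact (gammaIntegrand_integrableOn hs).mono_set Set.Ioc_subset_Ioi_self
  have hprim := intervalIntegral.continuousOn_primitive (a := 0) (b := s) hint
  have hmap : Continuous fun x : ℝ => x * s := continuous_mul_right s
  have hcomp : ContinuousOn ((fun u => ∫ t in Set.Ioc (0:ℝ) u, t ^ (s-1) * Real.exp (-t)) ∘
      (fun x : ℝ => x * s)) (Set.Icc 0 1) := by
    apply hprim.comp hmap.continuousOn
    intro x hx
    constructor
    · exact mul_nonneg hx.1 (le_of_lt hs)
    · show x * s ≤ s
      nlinarith [hx.2]
  apply hcomp.congr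
  intro x _
  simp only [Function.comp_apply]
  rw [lamI, MeasureTheory.integral_Ioc_eq_integral_Ioo]

lemma Rfun_continuousOn {a b : ℝ} (ha : 0 < a) (hb : 0 < b) :
    ContinuousOn (Rfun a b) (Set.Icc (0:ℝ) 1) :=
  (((lamI_comp_continuousOn hb).mul continuousOn_const).sub
    ((lamI_comp_continuousOn ha).mul continuousOn_const))

/-- Main part B : the comparison for all `x ∈ (0,1]`. -/
lemma mainR {a b x : ℝ} (ha : 0 < a) (hab : a ≤ b) (hx0 : 0 < x) (hx1 : x ≤ 1) :
    lamI b (x*b) * Real.Gamma a ≤ lamI a (x*a) * Real.Gamma b := by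
  have hb : 0 < b := lt_of_lt_of_le ha hab
  have hA : Rfun a b 1 ≤ 0 := by
    rw [Rfun, one_mul, one_mul]
    linarith [caseA ha hab]
  suffices h : Rfun a b x ≤ 0 by rw [Rfun] at h; linarith
  rcases eq_or_lt_of_le hx1 with h1 | hxlt
  · rw [h1]; exact hA
  by_cases hB : Bfun a b x ≤ 0
  · -- R antitone on [0,x], R x ≤ R 0 = 0
    have hanti : AntitoneOn (Rfun a b) (Set.Icc 0 x) := by
      apply antitoneOn_of_deriv_nonpos (convex_Icc 0 x)
      · exact (Rfun_continuousOn ha hb).mono (Set.Icc_subset_Icc le_rfl (le_of_lt hxlt))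
      · intro y hy
        rw [interior_Icc] at hy
        exact (Rfun_hasDerivAt ha hb hy.1).differentiableAt.differentiableWithinAt
      · intro y hy
        rw [interior_Icc] at hy
        rw [(Rfun_hasDerivAt ha hb hy.1).deriv]
        have hBy : Bfun a b y ≤ Bfun a b x :=
          Bfun_monotoneOn ha hab ⟨hy.1, by linarith [hy.2]⟩ ⟨hx0, hx1⟩ (le_of_lt hy.2)
        have hpos : (0:ℝ) < y ^ (a-1) * Real.exp (-(a*y)) := by
          apply mul_pos (Real.rpow_pos_of_pos hy.1 _) (Real.exp_pos _)
        nlinarith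
    have hRx := hanti (Set.mem_Icc.2 ⟨le_rfl, le_of_lt hx0⟩) (Set.mem_Icc.2 ⟨le_of_lt hx0, le_rfl⟩) (le_of_lt hx0)
    have hR0 : Rfun a b 0 = 0 := by
      simp [Rfun, lamI_zero]
    linarith
  · push_neg at hB
    have hmono : MonotoneOn (Rfun a b) (Set.Icc x 1) := by
      apply monotoneOn_of_deriv_nonneg (convex_Icc x 1)
      · exact (Rfun_continuousOn ha hb).mono (Set.Icc_subset_Icc (le_of_lt hx0) le_rfl)
      · intro y hy
        rw [interior_Icc] at hy
        exact (Rfun_hasDerivAt ha hb (lt_trans hx0 hy.1)).differentiableAt.differentiableWithinAt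
      · intro y hy
        rw [interior_Icc] at hy
        rw [(Rfun_hasDerivAt ha hb (lt_trans hx0 hy.1)).deriv]
        have hBy : Bfun a b x ≤ Bfun a b y :=
          Bfun_monotoneOn ha hab ⟨hx0, hx1⟩ ⟨lt_trans hx0 hy.1, le_of_lt hy.2⟩ (le_of_lt hy.1)
        have hy0 : 0 < y := lt_trans hx0 hy.1
        have hpos : (0:ℝ) ≤ y ^ (a-1) * Real.exp (-(a*y)) := by positivity
        nlinarith
    have := hmono (Set.mem_Icc.2 ⟨le_rfl, hx1⟩) (Set.mem_Icc.2 ⟨hx1, le_rfl⟩) hx1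
    linarith

/-- MAIN 1 : monotonicity of normalized lower incomplete gamma in the parameter. -/
lemma main1 {a b x : ℝ} (ha : 0 < a) (hab : a ≤ b) (hx0 : 0 < x) (hx1 : x ≤ 1) :
    lamI b (x*b) / Real.Gamma b ≤ lamI a (x*a) / Real.Gamma a := by
  rw [div_le_div_iff₀ (Real.Gamma_pos_of_pos (lt_of_lt_of_le ha hab)) (Real.Gamma_pos_of_pos ha)]
  exact mainR ha hab hx0 hx1


lemma Gamma_int {s : ℝ} (hs : 0 < s) :
    Real.Gamma s = ∫ t in Set.Ioi (0:ℝ), t ^ (s-1) * Real.exp (-t) := by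
  rw [Real.Gamma_eq_integral hs]
  apply MeasureTheory.setIntegral_congr_fun measurableSet_Ioi
  intro t _; ring

lemma gInt_mul_integrableOn {s : ℝ} (hs : 0 < s) :
    IntegrableOn (fun t : ℝ => (t ^ (s-1) * Real.exp (-t)) * t) (Set.Ioi (0:ℝ)) := by
  apply MeasureTheory.IntegrableOn.congr_fun (gammaIntegrand_integrableOn (by linarith : (0:ℝ) < s + 1))
    _ measurableSet_Ioi
  intro t ht
  rw [Set.mem_Ioi] at ht
  show t ^ (s + 1 - 1) * Real.exp (-t) = t ^ (s - 1) * Real.exp (-t) * t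
  rw [show s + 1 - 1 = (s - 1) + 1 by ring, Real.rpow_add ht, Real.rpow_one]
  ring

lemma gInt_mul_sq_integrableOn {s : ℝ} (hs : 0 < s) :
    IntegrableOn (fun t : ℝ => (t ^ (s-1) * Real.exp (-t)) * t ^ (2:ℕ)) (Set.Ioi (0:ℝ)) := by
  apply MeasureTheory.IntegrableOn.congr_fun (gammaIntegrand_integrableOn (by linarith : (0:ℝ) < s + 2))
    _ measurableSet_Ioi
  intro t ht
  rw [Set.mem_Ioi] at ht
  show t ^ (s + 2 - 1) * Real.exp (-t) = t ^ (s - 1) * Real.exp (-t) * t ^ (2:ℕ)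
  rw [show s + 2 - 1 = (s - 1) + 1 + 1 by ring, Real.rpow_add ht, Real.rpow_add ht, Real.rpow_one]
  ring

lemma gInt_mul_value {s : ℝ} (hs : 0 < s) :
    ∫ t in Set.Ioi (0:ℝ), (t ^ (s-1) * Real.exp (-t)) * t = s * Real.Gamma s := by
  have h1 : (∫ t in Set.Ioi (0:ℝ), (t ^ (s-1) * Real.exp (-t)) * t)
      = ∫ t in Set.Ioi (0:ℝ), t ^ (s+1-1) * Real.exp (-t) := by
    apply MeasureTheory.setIntegral_congr_fun measurableSet_Ioi
    intro t ht
    rw [Set.mem_Ioi] at ht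
    show t ^ (s - 1) * Real.exp (-t) * t = t ^ (s + 1 - 1) * Real.exp (-t)
    rw [show s + 1 - 1 = (s - 1) + 1 by ring, Real.rpow_add ht, Real.rpow_one]
    ring
  rw [h1, ← Gamma_int (by linarith : (0:ℝ) < s + 1), Real.Gamma_add_one (ne_of_gt hs)]

lemma gInt_mul_sq_value {s : ℝ} (hs : 0 < s) :
    ∫ t in Set.Ioi (0:ℝ), (t ^ (s-1) * Real.exp (-t)) * t ^ (2:ℕ)
      = (s+1) * (s * Real.Gamma s) := by
  have h1 : (∫ t in Set.Ioi (0:ℝ), (t ^ (s-1) * Real.exp (-t)) * t ^ (2:ℕ))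
      = ∫ t in Set.Ioi (0:ℝ), t ^ (s+2-1) * Real.exp (-t) := by
    apply MeasureTheory.setIntegral_congr_fun measurableSet_Ioi
    intro t ht
    rw [Set.mem_Ioi] at ht
    show t ^ (s - 1) * Real.exp (-t) * t ^ (2:ℕ) = t ^ (s + 2 - 1) * Real.exp (-t)
    rw [show s + 2 - 1 = (s - 1) + 1 + 1 by ring, Real.rpow_add ht, Real.rpow_add ht, Real.rpow_one]
    ring
  rw [h1, ← Gamma_int (by linarith : (0:ℝ) < s + 2)]
  rw [show s + 2 = (s + 1) + 1 by ring, Real.Gamma_add_one (by linarith)]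
  rw [show s + 1 = s + 1 by ring, Real.Gamma_add_one (ne_of_gt hs)]

lemma weighted_total {s : ℝ} (hs : 0 < s) :
    ∫ t in Set.Ioi (0:ℝ), (t ^ (s-1) * Real.exp (-t)) * (s - t)^(2:ℕ) = s * Real.Gamma s := by
  have hexpand : (∫ t in Set.Ioi (0:ℝ), (t ^ (s-1) * Real.exp (-t)) * (s - t)^(2:ℕ))
      = ∫ t in Set.Ioi (0:ℝ), (s^(2:ℕ) * (t ^ (s-1) * Real.exp (-t))
        - (2*s) * ((t ^ (s-1) * Real.exp (-t)) * t)
        + (t ^ (s-1) * Real.exp (-t)) * t^(2:ℕ)) := by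
    apply MeasureTheory.setIntegral_congr_fun measurableSet_Ioi
    intro t _; ring
  rw [hexpand]
  rw [MeasureTheory.integral_add, MeasureTheory.integral_sub]
  · rw [MeasureTheory.integral_const_mul, MeasureTheory.integral_const_mul,
      ← Gamma_int hs, gInt_mul_value hs, gInt_mul_sq_value hs]
    ring
  · exact (gammaIntegrand_integrableOn hs).const_mul _
  · exact (gInt_mul_integrableOn hs).const_mul _
  · exact ((gammaIntegrand_integrableOn hs).const_mul _).sub ((gInt_mul_integrableOn hs).const_mul _)
  · exact gInt_mul_sq_integrableOn hs

lemma weighted_integrableOn {s : ℝ} (hs : 0 < s) :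
    IntegrableOn (fun t : ℝ => (t ^ (s-1) * Real.exp (-t)) * (s - t)^(2:ℕ)) (Set.Ioi (0:ℝ)) := by
  have : (fun t : ℝ => (t ^ (s-1) * Real.exp (-t)) * (s - t)^(2:ℕ))
      = fun t : ℝ => (s^(2:ℕ) * (t ^ (s-1) * Real.exp (-t))
        - (2*s) * ((t ^ (s-1) * Real.exp (-t)) * t)
        + (t ^ (s-1) * Real.exp (-t)) * t^(2:ℕ)) := by
    funext t; ring
  rw [this]
  exact (((gammaIntegrand_integrableOn hs).const_mul _).sub
    ((gInt_mul_integrableOn hs).const_mul _)).add (gInt_mul_sq_integrableOn hs)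

/-- MAIN 2 : the Chebyshev tail bound. -/
lemma tail_bound {s x : ℝ} (hs : 0 < s) (hx0 : 0 ≤ x) (hx1 : x < 1) :
    lamI s (x*s) ≤ Real.Gamma s / (s * (1-x)^(2:ℕ)) := by
  set c : ℝ := (s * (1-x))^(2:ℕ) with hc
  have hc0 : 0 < c := by
    rw [hc]; exact pow_pos (by nlinarith) 2
  have step1 : lamI s (x*s) ≤ ∫ t in Set.Ioo (0:ℝ) (x*s),
      ((t ^ (s-1) * Real.exp (-t)) * (s - t)^(2:ℕ)) * c⁻¹ := by
    rw [lamI]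
    apply MeasureTheory.setIntegral_mono_on
    · exact (gammaIntegrand_integrableOn hs).mono_set Set.Ioo_subset_Ioi_self
    · exact ((weighted_integrableOn hs).mono_set Set.Ioo_subset_Ioi_self).mul_const _
    · exact measurableSet_Ioo
    · intro t ht
      have ht0 : 0 < t := ht.1
      have hts : t < x * s := ht.2
      have hG : 0 ≤ t ^ (s-1) * Real.exp (-t) := by positivity
      have hkey : c ≤ (s - t)^(2:ℕ) := by
        rw [hc]
        have h1 : s * (1-x) ≤ s - t := by nlinarith
        have h2 : 0 ≤ s * (1-x) := by nlinarith
        nlinarith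
      calc t ^ (s-1) * Real.exp (-t) = ((t ^ (s-1) * Real.exp (-t)) * c) * c⁻¹ := by
            field_simp
      _ ≤ ((t ^ (s-1) * Real.exp (-t)) * (s - t)^(2:ℕ)) * c⁻¹ := by
            apply mul_le_mul_of_nonneg_right _ (le_of_lt (inv_pos.2 hc0))
            exact mul_le_mul_of_nonneg_left hkey hG
  have step2 : (∫ t in Set.Ioo (0:ℝ) (x*s), ((t ^ (s-1) * Real.exp (-t)) * (s - t)^(2:ℕ)) * c⁻¹)
      ≤ ∫ t in Set.Ioi (0:ℝ), ((t ^ (s-1) * Real.exp (-t)) * (s - t)^(2:ℕ)) * c⁻¹ := by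
    apply MeasureTheory.setIntegral_mono_set
    · exact (weighted_integrableOn hs).mul_const _
    · filter_upwards [MeasureTheory.ae_restrict_mem measurableSet_Ioi] with t ht
      have ht0 : (0:ℝ) < t := ht
      apply mul_nonneg (mul_nonneg (by positivity) (by positivity)) (inv_nonneg.2 (le_of_lt hc0))
    · exact HasSubset.Subset.eventuallyLE Set.Ioo_subset_Ioi_self
  have step3 : (∫ t in Set.Ioi (0:ℝ), ((t ^ (s-1) * Real.exp (-t)) * (s - t)^(2:ℕ)) * c⁻¹)
      = Real.Gamma s / (s * (1-x)^(2:ℕ)) := by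
    rw [MeasureTheory.integral_mul_const, weighted_total hs, hc]
    have hs' : s ≠ 0 := ne_of_gt hs
    have hx' : (1:ℝ) - x ≠ 0 := by intro h; rw [sub_eq_zero] at h; linarith
    field_simp
  linarith

/-- small-`y` bound. -/
lemma lamI_le_pow {s y : ℝ} (hs : 0 < s) (hy : 0 ≤ y) : lamI s y ≤ y ^ s / s := by
  have hmono : lamI s y ≤ ∫ t in Set.Ioo (0:ℝ) y, t ^ (s-1) := by
    rw [lamI]
    apply MeasureTheory.setIntegral_mono_on
    · exact (gammaIntegrand_integrableOn hs).mono_set Set.Ioo_subset_Ioi_self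
    · exact ((intervalIntegral.intervalIntegrable_rpow' (by linarith : (-1:ℝ) < s - 1)).1.mono_set
        Set.Ioo_subset_Ioc_self)
    · exact measurableSet_Ioo
    · intro t ht
      have h1 : Real.exp (-t) ≤ 1 := by
        rw [Real.exp_le_one_iff]; linarith [ht.1]
      nlinarith [Real.rpow_nonneg (le_of_lt ht.1) (s-1), Real.exp_pos (-t)]
  have hval : (∫ t in Set.Ioo (0:ℝ) y, t ^ (s-1)) = y ^ s / s := by
    rw [← MeasureTheory.integral_Ioc_eq_integral_Ioo, ← intervalIntegral.integral_of_le hy]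
    rw [integral_rpow (Or.inl (by linarith : (-1:ℝ) < s - 1))]
    rw [show s - 1 + 1 = s by ring, Real.zero_rpow (ne_of_gt hs)]
    ring
  linarith


/-- the index parameter `s = (m+1)/2`. -/
def sIdx (m : ℕ) : ℝ := ((m:ℝ)+1)/2

lemma sIdx_pos (m : ℕ) : 0 < sIdx m := by
  rw [sIdx]; positivity

lemma sIdx_mono : Monotone sIdx := by
  intro m m' h
  rw [sIdx, sIdx]
  have : (m:ℝ) ≤ (m':ℝ) := Nat.cast_le.2 h
  linarith

/-- the feasible set. -/
def Sset (δ : ℝ) (m : ℕ) : Set ℝ :=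
  {α : ℝ | α ∈ Set.Ioo (0:ℝ) 1 ∧ lamI (sIdx m) (α * sIdx m) / Real.Gamma (sIdx m) ≤ δ}

lemma Sset_bddAbove (δ : ℝ) (m : ℕ) : BddAbove (Sset δ m) :=
  ⟨1, fun α hα => le_of_lt hα.1.2⟩

lemma Sset_nonempty {δ : ℝ} (hδ0 : 0 < δ) (m : ℕ) : (Sset δ m).Nonempty := by
  set s := sIdx m with hsdef
  have hs : 0 < s := sIdx_pos m
  have hΓ : 0 < Real.Gamma s := Real.Gamma_pos_of_pos hs
  set c : ℝ := (δ * s * Real.Gamma s) ^ s⁻¹ / s with hcdef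
  have hc0 : 0 < c := div_pos (Real.rpow_pos_of_pos (by positivity) _) hs
  refine ⟨min (1/2) c, ⟨⟨lt_min (by norm_num) hc0, ?_⟩, ?_⟩⟩
  · calc min (1/2) c ≤ 1/2 := min_le_left _ _
    _ < 1 := by norm_num
  · set α := min (1/2) c with hα
    have hα0 : 0 < α := lt_min (by norm_num) hc0
    have hαc : α ≤ c := min_le_right _ _
    have h1 : lamI s (α * s) ≤ (α*s) ^ s / s :=
      lamI_le_pow hs (mul_nonneg (le_of_lt hα0) (le_of_lt hs))
    have h2 : α * s ≤ (δ * s * Real.Gamma s) ^ s⁻¹ := by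
      have := mul_le_mul_of_nonneg_right hαc (le_of_lt hs)
      rwa [hcdef, div_mul_cancel₀ _ (ne_of_gt hs)] at this
    have h3 : (α*s) ^ s ≤ δ * s * Real.Gamma s := by
      calc (α*s) ^ s ≤ ((δ * s * Real.Gamma s) ^ s⁻¹) ^ s :=
            Real.rpow_le_rpow (mul_nonneg (le_of_lt hα0) (le_of_lt hs)) h2 (le_of_lt hs)
      _ = δ * s * Real.Gamma s := by
            rw [← Real.rpow_mul (by positivity), inv_mul_cancel₀ (ne_of_gt hs), Real.rpow_one]
    rw [div_le_iff₀ hΓ]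
    calc lamI s (α * s) ≤ (α*s) ^ s / s := h1
    _ ≤ (δ * s * Real.Gamma s) / s := by gcongr
    _ = δ * Real.Gamma s := by field_simp

lemma Sset_subset {δ : ℝ} {m m' : ℕ} (h : m ≤ m') : Sset δ m ⊆ Sset δ m' := by
  intro α hα
  obtain ⟨hio, hle⟩ := hα
  refine ⟨hio, le_trans ?_ hle⟩
  exact main1 (sIdx_pos m) (sIdx_mono h) hio.1 (le_of_lt hio.2)

end

lemma alphaSeq_eq (δ : ℝ) (m : ℕ) : alphaSeq δ (m+1) = sSup (Sset δ m) := by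
  rw [alphaSeq]
  congr 1
  ext α
  have hcast : ((m+1:ℕ):ℝ)/2 = sIdx m := by push_cast [sIdx]; ring
  simp only [Sset, Set.mem_setOf_eq, lamI, hcast]
  constructor
  · rintro ⟨h1, h2⟩
    refine ⟨h1, ?_⟩
    rwa [show α * sIdx m = α * ((m+1:ℕ):ℝ) / 2 by rw [← hcast]; ring]
  · rintro ⟨h1, h2⟩
    refine ⟨h1, ?_⟩
    rwa [show α * ((m+1:ℕ):ℝ) / 2 = α * sIdx m by rw [← hcast]; ring]

/-- The sequence `{α_k}` is monotonically increasing in `k` and converges to `1`. -/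
theorem stmt_3 (δ : ℝ) (hδ : δ ∈ Set.Ioo (0 : ℝ) 1) :
    (Monotone fun k : ℕ => alphaSeq δ (k + 1)) ∧
    Filter.Tendsto (fun k : ℕ => alphaSeq δ (k + 1)) Filter.atTop (nhds 1) := by
  obtain ⟨hδ0, hδ1⟩ := hδ
  have hle1 : ∀ m : ℕ, alphaSeq δ (m+1) ≤ 1 := by
    intro m
    rw [alphaSeq_eq]
    exact Real.sSup_le (fun α hα => le_of_lt hα.1.2) zero_le_one
  constructor
  · intro m m' h
    simp only
    rw [alphaSeq_eq, alphaSeq_eq]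
    exact csSup_le_csSup (Sset_bddAbove δ m') (Sset_nonempty hδ0 m) (Sset_subset h)
  · rw [Metric.tendsto_atTop]
    intro ε hε
    set β : ℝ := max (1/2) (1 - ε/2) with hβdef
    have hβ0 : 0 < β := lt_of_lt_of_le (by norm_num) (le_max_left _ _)
    have hβ1 : β < 1 := max_lt (by norm_num) (by linarith)
    have h1β : 1 - β ≤ ε/2 := by
      have := le_max_right (1/2) (1 - ε/2)
      linarith
    have hden : 0 < δ * (1-β)^(2:ℕ) := mul_pos hδ0 (pow_pos (by linarith) 2)
    obtain ⟨N, hN⟩ := exists_nat_gt (2 / (δ * (1-β)^(2:ℕ)))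
    refine ⟨N, fun m hm => ?_⟩
    have hmN : (N:ℝ) ≤ (m:ℝ) := Nat.cast_le.2 hm
    set s := sIdx m with hsdef
    have hs : 0 < s := sIdx_pos m
    have hΓ : 0 < Real.Gamma s := Real.Gamma_pos_of_pos hs
    have hslarge : 1 / (δ * (1-β)^(2:ℕ)) < s := by
      rw [hsdef, sIdx]
      have h2 : 2 / (δ * (1-β)^(2:ℕ)) < (m:ℝ) + 1 := by linarith
      have h3 : 1 / (δ * (1-β)^(2:ℕ)) = (2 / (δ * (1-β)^(2:ℕ)))/2 := by ring
      rw [h3]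
      linarith
    have hA : 1/δ < s * (1-β)^(2:ℕ) := by
      rw [div_lt_iff₀ hden] at hslarge
      have hβ2 : (0:ℝ) < (1-β)^(2:ℕ) := pow_pos (by linarith) 2
      rw [div_lt_iff₀ hδ0]
      nlinarith
    have hmem : β ∈ Sset δ m := by
      refine ⟨⟨hβ0, hβ1⟩, ?_⟩
      rw [← hsdef]
      have htail : lamI s (β * s) ≤ Real.Gamma s / (s * (1-β)^(2:ℕ)) :=
        tail_bound hs (le_of_lt hβ0) hβ1
      rw [div_le_iff₀ hΓ]
      have hApos : (0:ℝ) < s * (1-β)^(2:ℕ) := mul_pos hs (pow_pos (by linarith) 2)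
      calc lamI s (β * s) ≤ Real.Gamma s / (s * (1-β)^(2:ℕ)) := htail
      _ ≤ δ * Real.Gamma s := by
          rw [div_le_iff₀ hApos]
          have : 1 < δ * (s * (1-β)^(2:ℕ)) := by
            rw [div_lt_iff₀ hδ0] at hA
            linarith
          nlinarith
    have hβle : β ≤ alphaSeq δ (m+1) := by
      rw [alphaSeq_eq]
      exact le_csSup (Sset_bddAbove δ m) hmem
    rw [Real.dist_eq, abs_of_nonpos (by linarith [hle1 m])]
    have := hle1 m
    linarith
end

section
/- For all x ≥ 0, exp(x)/√(1+2x) ≤ exp(x²). Moreover, for x ∈ (−1/2, 0], exp(x)/√(1+2x) ≥ exp(x²); in particular, for x ∈ [0, 1/2), exp(−x)/√(1−2x) ≥ exp(x²). -/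
open Real

private noncomputable def f8 (x : ℝ) : ℝ := x ^ 2 - x + Real.log (1 + 2 * x) / 2

private lemma f8_deriv {x : ℝ} (hx : -(1/2) < x) :
    HasDerivAt f8 (2 * x - 1 + (2 / (1 + 2 * x)) / 2) x := by
  have hpos : 0 < 1 + 2 * x := by linarith
  have h1 : HasDerivAt (fun x : ℝ => 1 + 2 * x) 2 x := by
    simpa using ((hasDerivAt_id x).const_mul 2).const_add 1
  have hlog : HasDerivAt (fun x : ℝ => Real.log (1 + 2 * x)) (2 / (1 + 2 * x)) x :=
    h1.log hpos.ne'
  have hsq : HasDerivAt (fun x : ℝ => x ^ 2 - x) (2 * x - 1) x := by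
    exact ((hasDerivAt_pow 2 x).sub (hasDerivAt_id' x)).congr_deriv (by norm_num)
  exact hsq.add (hlog.div_const 2)

private lemma f8_mono : MonotoneOn f8 (Set.Ioi (-(1/2) : ℝ)) := by
  have hint : interior (Set.Ioi (-(1/2) : ℝ)) = Set.Ioi (-(1/2) : ℝ) := interior_Ioi
  apply monotoneOn_of_deriv_nonneg (convex_Ioi _)
  · exact fun x hx => ((f8_deriv hx).continuousAt).continuousWithinAt
  · rw [hint]; exact fun x hx => (f8_deriv hx).differentiableAt.differentiableWithinAt
  · rw [hint]
    intro x hx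
    rw [(f8_deriv hx).deriv]
    have hpos : 0 < 1 + 2 * x := by simp at hx; linarith
    have : 2 * x - 1 + (2 / (1 + 2 * x)) / 2 = 4 * x ^ 2 / (1 + 2 * x) := by
      field_simp; ring
    rw [this]; positivity

private lemma f8_zero : f8 0 = 0 := by simp [f8]

private lemma sqrt_eq_exp8 {x : ℝ} (hx : -(1/2) < x) :
    Real.sqrt (1 + 2 * x) = Real.exp (Real.log (1 + 2 * x) / 2) := by
  have hpos : 0 < 1 + 2 * x := by linarith
  rw [Real.exp_half, Real.exp_log hpos]

/-- For `x ≥ 0`, `exp(x)/√(1+2x) ≤ exp(x²)`; for `x ∈ (−1/2,0]`,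
`exp(x)/√(1+2x) ≥ exp(x²)`; in particular, for `x ∈ [0,1/2)`,
`exp(−x)/√(1−2x) ≥ exp(x²)`. -/
theorem stmt_8 :
    (∀ x : ℝ, 0 ≤ x → Real.exp x / Real.sqrt (1 + 2 * x) ≤ Real.exp (x ^ 2)) ∧
    (∀ x : ℝ, -(1 / 2) < x → x ≤ 0 →
      Real.exp (x ^ 2) ≤ Real.exp x / Real.sqrt (1 + 2 * x)) ∧
    (∀ x : ℝ, 0 ≤ x → x < 1 / 2 →
      Real.exp (x ^ 2) ≤ Real.exp (-x) / Real.sqrt (1 - 2 * x)) := by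
  have key : ∀ x : ℝ, -(1/2) < x →
      Real.exp x / Real.sqrt (1 + 2 * x) = Real.exp (x ^ 2 - f8 x) := by
    intro x hx
    rw [sqrt_eq_exp8 hx, ← Real.exp_sub]
    congr 1
    simp [f8]; ring
  refine ⟨fun x hx => ?_, fun x hx hx0 => ?_, fun x hx hx2 => ?_⟩
  · have hx' : -(1/2:ℝ) < x := by linarith
    rw [key x hx', Real.exp_le_exp]
    have := f8_mono (Set.mem_Ioi.mpr (by norm_num : -(1/2:ℝ) < 0)) (Set.mem_Ioi.mpr hx') hx
    rw [f8_zero] at this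
    linarith
  · have hx' : -(1/2:ℝ) < x := by linarith
    rw [key x hx', Real.exp_le_exp]
    have := f8_mono (Set.mem_Ioi.mpr hx') (Set.mem_Ioi.mpr (by norm_num : -(1/2:ℝ) < 0)) hx0
    rw [f8_zero] at this
    linarith
  · have hx' : -(1/2:ℝ) < -x := by linarith
    have := key (-x) hx'
    have hm := f8_mono (Set.mem_Ioi.mpr hx') (Set.mem_Ioi.mpr (by norm_num : -(1/2:ℝ) < 0))
      (by linarith : -x ≤ 0)
    rw [f8_zero] at hm
    have heq : Real.exp (-x) / Real.sqrt (1 - 2 * x) = Real.exp ((-x) ^ 2 - f8 (-x)) := by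
      rw [show (1 : ℝ) - 2 * x = 1 + 2 * (-x) by ring]; exact this
    rw [heq, Real.exp_le_exp]
    have : (-x) ^ 2 = x ^ 2 := by ring
    linarith [hm, this.ge]
end
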